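/- Fix α>0 and u,v∈ℝ with u>−α, v∈(−α,α) and v<u. Then the process k ↦ z^stat_{u,v}(2+k,2)/z^stat_{u,v}(2,2), k∈ℤ≥0, has the same law as the process (z_{u,v}(k))_{k∈ℤ≥0}. -/

import Mathlib

open MeasureTheory ProbabilityTheory Filter

open Set ENNReal

noncomputable section

/-- Density of the inverse-gamma distribution with parameter `θ`. -/
def invGammaPdf (θ x : ℝ) : ℝ :=
  if 0 < x then (Real.Gamma θ)⁻¹ * x ^ (-θ - 1) * Real.exp (-1 / x) else 0

/-- The inverse-gamma distribution with parameter `θ`, as a measure on `ℝ`. -/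
def invGammaMeasure (θ : ℝ) : Measure ℝ :=
  MeasureTheory.volume.withDensity fun x => ENNReal.ofReal (invGammaPdf θ x)

/-- The octant index set `{(n,m) : 1 ≤ m ≤ n}`. -/
abbrev OctIdx : Type := {p : ℕ × ℕ // 1 ≤ p.2 ∧ p.2 ≤ p.1}

/-- Partition function of the half-space polymer with weights `w`: the sum over up-right
paths from `(1,1)` to `(n,m)` staying in the octant of the product of the weights along
the path (defined through the equivalent recursion, with value `0` off the octant). -/
def polymerZ (w : ℕ → ℕ → ℝ) (n m : ℕ) : ℝ :=
  if _h1 : m = 0 ∨ n < m then 0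
  else if _h2 : n = 1 then w 1 1
  else w n m * (polymerZ w (n - 1) m + polymerZ w n (m - 1))
termination_by n + m
decreasing_by all_goals omega

/-- The process `z_{u,v}` built from the multiplicative random walks `r1, r2` and
the random variable `winv` (interpreted as `ϖ⁻¹`):
`z_{u,v}(k) = r₂(k) + ϖ⁻¹ ∑_{ℓ=1}^k r₁(ℓ) r₂(k)/r₂(ℓ-1)`. -/
def zuvProc {Ω : Type*} (r1 r2 : ℕ → Ω → ℝ) (winv : Ω → ℝ) (k : ℕ) (ω : Ω) : ℝ :=
  r2 k ω + winv ω * ∑ ℓ ∈ Finset.Icc 1 k, r1 ℓ ω * (r2 k ω / r2 (ℓ - 1) ω)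

/-- The data of the `z_{u,v}` construction: `r1, r2` are multiplicative random walks
started from `1` with i.i.d. inverse-gamma increment ratios of parameters `α+v`, `α-v`,
all the increment ratios and `winv` being mutually independent, where `winv = ϖ⁻¹` for
`ϖ ~ Gamma⁻¹(u-v)` (with the convention `winv = 0` when `u = v`). -/
structure IsZuvEnv {Ω : Type*} [MeasurableSpace Ω] (P : Measure Ω) (α u v : ℝ)
    (r1 r2 : ℕ → Ω → ℝ) (winv : Ω → ℝ) : Prop where
  meas_r1 : ∀ k, Measurable (r1 k)
  meas_r2 : ∀ k, Measurable (r2 k)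
  meas_winv : Measurable winv
  r1_zero : r1 0 =ᵐ[P] fun _ => 1
  r2_zero : r2 0 =ᵐ[P] fun _ => 1
  indep : iIndepFun
    (Sum.elim (fun k ω => r1 (k + 1) ω / r1 k ω)
      (Sum.elim (fun k ω => r2 (k + 1) ω / r2 k ω) (fun _ : Unit => winv))) P
  law_r1 : ∀ k, Measure.map (fun ω => r1 (k + 1) ω / r1 k ω) P = invGammaMeasure (α + v)
  law_r2 : ∀ k, Measure.map (fun ω => r2 (k + 1) ω / r2 k ω) P = invGammaMeasure (α - v)
  winv_eq_zero : u = v → winv = fun _ => 0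
  law_winv : u ≠ v → Measure.map winv P = (invGammaMeasure (u - v)).map fun x => x⁻¹



lemma my_iIndepFun_reindex {ι ι' Ω β : Type*} [MeasurableSpace Ω] {μ : Measure Ω}
    [mβ : MeasurableSpace β] {f : ι → Ω → β} (g : ι' → ι) (hg : Function.Injective g)
    (h : iIndepFun f μ) :
    iIndepFun (fun i => f (g i)) μ := by
  classical
  rw [iIndepFun_iff_measure_inter_preimage_eq_mul] at h ⊢
  intro S sets hsets
  have key := h (S.image g) (sets := Function.extend g sets fun _ => Set.univ) ?_
  · have h1 : (⋂ i ∈ S.image g, f i ⁻¹' (Function.extend g sets fun _ => Set.univ) i)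
        = ⋂ j ∈ S, f (g j) ⁻¹' sets j := by
      rw [Finset.set_biInter_finset_image]
      refine Set.iInter₂_congr fun j hj => ?_
      rw [hg.extend_apply]
    have h2 : (∏ i ∈ S.image g, μ (f i ⁻¹' (Function.extend g sets fun _ => Set.univ) i))
        = ∏ j ∈ S, μ (f (g j) ⁻¹' sets j) := by
      rw [Finset.prod_image (fun a _ b _ hab => hg hab)]
      refine Finset.prod_congr rfl fun j hj => ?_
      rw [hg.extend_apply]
    rw [h1, h2] at key
    exact key
  · intro i hi
    rcases Finset.mem_image.mp hi with ⟨j, hj, rfl⟩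
    rw [hg.extend_apply]
    exact hsets j hj

lemma my_map_pi_eq_of_iIndep {ι Ω Ω' : Type*} [MeasurableSpace Ω] [MeasurableSpace Ω']
    {P : Measure Ω} {P' : Measure Ω'} [IsProbabilityMeasure P] [IsProbabilityMeasure P']
    {X : ι → Ω → ℝ} {Y : ι → Ω' → ℝ}
    (hX : ∀ i, Measurable (X i)) (hY : ∀ i, Measurable (Y i))
    (hXi : iIndepFun X P)
    (hYi : iIndepFun Y P')
    (hlaw : ∀ i, Measure.map (X i) P = Measure.map (Y i) P') :
    Measure.map (fun ω i => X i ω) P = Measure.map (fun ω i => Y i ω) P' := by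
  classical
  have hXm : Measurable (fun ω i => X i ω) := measurable_pi_lambda _ hX
  have hYm : Measurable (fun ω i => Y i ω) := measurable_pi_lambda _ hY
  have : IsProbabilityMeasure (Measure.map (fun ω i => Y i ω) P') :=
    Measure.isProbabilityMeasure_map hYm.aemeasurable
  have : IsProbabilityMeasure (Measure.map (fun ω i => X i ω) P) :=
    Measure.isProbabilityMeasure_map hXm.aemeasurable
  set C : Set (Set (ι → ℝ)) :=
    piiUnionInter (fun i => { s | MeasurableSet[(MeasurableSpace.comap (fun x : ι → ℝ => x i) inferInstance)] s }) Set.univ with hC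
  have hgen : (MeasurableSpace.pi : MeasurableSpace (ι → ℝ)) = MeasurableSpace.generateFrom C := by
    have h1 := generateFrom_piiUnionInter_measurableSet
      (fun i : ι => MeasurableSpace.comap (fun x : ι → ℝ => x i) inferInstance) Set.univ
    rw [iSup_univ] at h1
    exact h1.symm
  refine ext_of_generate_finite C hgen ?_ ?_ (by simp)
  · exact isPiSystem_piiUnionInter _
      (fun i => @MeasurableSpace.isPiSystem_measurableSet _ (MeasurableSpace.comap (fun x : ι → ℝ => x i) inferInstance)) _
  · rintro s ⟨t, -, f, hf, rfl⟩
    have hA : ∀ i ∈ t, ∃ A : Set ℝ, MeasurableSet A ∧ (fun x : ι → ℝ => x i) ⁻¹' A = f i :=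
      fun i hi => (hf i hi)
    choose A hAmeas hApre using hA
    set B : ι → Set ℝ := fun i => if h : i ∈ t then A i h else Set.univ with hB
    have hBmeas : ∀ i ∈ t, MeasurableSet (B i) := by
      intro i hi; simp only [hB, dif_pos hi]; exact hAmeas i hi
    have hfB : ∀ i ∈ t, f i = (fun x : ι → ℝ => x i) ⁻¹' B i := by
      intro i hi; simp only [hB, dif_pos hi, hApre i hi]
    have hmeas_s : MeasurableSet (⋂ i ∈ t, f i) := by
      refine Finset.measurableSet_biInter _ fun i hi => ?_
      rw [hfB i hi]
      exact measurable_pi_apply i (hBmeas i hi)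
    rw [Measure.map_apply hXm hmeas_s, Measure.map_apply hYm hmeas_s]
    have hXpre : (fun ω i => X i ω) ⁻¹' (⋂ i ∈ t, f i) = ⋂ i ∈ t, X i ⁻¹' B i := by
      simp only [Set.preimage_iInter]
      exact Set.iInter₂_congr fun i hi => by rw [hfB i hi]; rfl
    have hYpre : (fun ω i => Y i ω) ⁻¹' (⋂ i ∈ t, f i) = ⋂ i ∈ t, Y i ⁻¹' B i := by
      simp only [Set.preimage_iInter]
      exact Set.iInter₂_congr fun i hi => by rw [hfB i hi]; rfl
    rw [hXpre, hYpre, hXi.measure_inter_preimage_eq_mul t hBmeas,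
      hYi.measure_inter_preimage_eq_mul t hBmeas]
    refine Finset.prod_congr rfl fun i hi => ?_
    rw [← Measure.map_apply (hX i) (hBmeas i hi), ← Measure.map_apply (hY i) (hBmeas i hi),
      hlaw i]


lemma invGamma_nonpos (θ : ℝ) : invGammaMeasure θ {x : ℝ | x ≤ 0} = 0 := by
  have h : {x : ℝ | x ≤ 0} = Set.Iic (0:ℝ) := rfl
  rw [invGammaMeasure, h, withDensity_apply _ measurableSet_Iic]
  have hz : ∀ᵐ x ∂(volume : Measure ℝ), x ∈ Set.Iic (0:ℝ) →
      ENNReal.ofReal (invGammaPdf θ x) = (fun _ : ℝ => (0:ℝ≥0∞)) x := by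
    refine Filter.Eventually.of_forall fun x hx => ?_
    have hnx : ¬ (0:ℝ) < x := not_lt.mpr hx
    simp [invGammaPdf, hnx]
  rw [setLIntegral_congr_fun_ae measurableSet_Iic hz]
  simp

lemma ae_pos_of_law {Ω : Type*} [MeasurableSpace Ω] {P : Measure Ω} {f : Ω → ℝ}
    (hf : Measurable f) {θ : ℝ} (h : Measure.map f P = invGammaMeasure θ) :
    ∀ᵐ ω ∂P, 0 < f ω := by
  have hm : MeasurableSet {x : ℝ | x ≤ 0} := measurableSet_Iic
  have h0 : P (f ⁻¹' {x | x ≤ 0}) = 0 := by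
    rw [← Measure.map_apply hf hm, h, invGamma_nonpos]
  have hset : {ω | ¬ 0 < f ω} = f ⁻¹' {x | x ≤ 0} := by ext ω; simp [not_lt]
  rw [ae_iff, hset]; exact h0

/-- product of the first-row coordinates -/
def prodFst (x : ℕ ⊕ (ℕ ⊕ Unit) → ℝ) (n : ℕ) : ℝ := ∏ j ∈ Finset.range n, x (Sum.inl j)
def prodSnd (x : ℕ ⊕ (ℕ ⊕ Unit) → ℝ) (n : ℕ) : ℝ := ∏ j ∈ Finset.range n, x (Sum.inr (Sum.inl j))

def Ffun (x : ℕ ⊕ (ℕ ⊕ Unit) → ℝ) : ℕ → ℝ := fun k =>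
  prodSnd x k + x (Sum.inr (Sum.inr ())) *
    ∑ ℓ ∈ Finset.Icc 1 k, prodFst x ℓ * (prodSnd x k / prodSnd x (ℓ - 1))

lemma measurable_Ffun : Measurable Ffun := by
  apply measurable_pi_lambda
  intro k
  unfold Ffun prodFst prodSnd
  apply Measurable.add
  · exact Finset.measurable_prod _ fun j _ => measurable_pi_apply _
  · apply Measurable.mul (measurable_pi_apply _)
    apply Finset.measurable_sum
    intro ℓ _
    apply Measurable.mul
    · exact Finset.measurable_prod _ fun j _ => measurable_pi_apply _
    · apply Measurable.div <;>
        exact Finset.measurable_prod _ fun j _ => measurable_pi_apply _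

lemma polymerZ_col0 (w : ℕ → ℕ → ℝ) (n : ℕ) : polymerZ w n 0 = 0 := by
  rw [polymerZ]; simp

lemma polymerZ_12 (w : ℕ → ℕ → ℝ) : polymerZ w 1 2 = 0 := by
  rw [polymerZ]; norm_num

lemma polymerZ_11 (w : ℕ → ℕ → ℝ) : polymerZ w 1 1 = w 1 1 := by
  rw [polymerZ]; norm_num

lemma polymerZ_row1 (w : ℕ → ℕ → ℝ) (n : ℕ) (h2 : 2 ≤ n) :
    polymerZ w n 1 = w n 1 * polymerZ w (n-1) 1 := by
  rw [polymerZ, dif_neg (by omega), dif_neg (by omega), polymerZ_col0, add_zero]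

lemma polymerZ_row2 (w : ℕ → ℕ → ℝ) (n : ℕ) (h2 : 2 ≤ n) :
    polymerZ w n 2 = w n 2 * (polymerZ w (n-1) 2 + polymerZ w n 1) := by
  rw [polymerZ, dif_neg (by omega), dif_neg (by omega)]

lemma polymerZ_21 (w : ℕ → ℕ → ℝ) (h11 : w 1 1 = 1) (h21 : w 2 1 = 1) :
    polymerZ w 2 1 = 1 := by
  rw [polymerZ_row1 w 2 le_rfl]
  norm_num [polymerZ_11, h11, h21]

lemma polymerZ_22 (w : ℕ → ℕ → ℝ) (h11 : w 1 1 = 1) (h21 : w 2 1 = 1) :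
    polymerZ w 2 2 = w 2 2 := by
  rw [polymerZ_row2 w 2 le_rfl]
  norm_num [polymerZ_12, polymerZ_21 w h11 h21]

lemma polymerZ_row1_prod (w : ℕ → ℕ → ℝ) (h11 : w 1 1 = 1) (h21 : w 2 1 = 1) :
    ∀ k, polymerZ w (2+k) 1 = ∏ j ∈ Finset.range k, w (3+j) 1 := by
  intro k
  induction k with
  | zero => simpa using polymerZ_21 w h11 h21
  | succ k ih =>
    rw [show 2 + (k+1) = (2+k) + 1 from by omega, polymerZ_row1 w _ (by omega),
      Nat.add_sub_cancel, ih, Finset.prod_range_succ, show (2+k)+1 = 3+k from by omega]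
    ring

lemma walk_eq_prod (q : ℕ → ℝ) (h0 : q 0 = 1) (hr : ∀ j, q (j+1) / q j ≠ 0) :
    ∀ n, (∏ j ∈ Finset.range n, q (j+1) / q j) = q n ∧ q n ≠ 0 := by
  intro n
  induction n with
  | zero => simp [h0]
  | succ n ih =>
    obtain ⟨hp, hne⟩ := ih
    have hq : q (n+1) ≠ 0 := by
      intro h
      exact hr n (by rw [h, zero_div])
    refine ⟨?_, hq⟩
    rw [Finset.prod_range_succ, hp, mul_comm, div_mul_cancel₀ _ hne]

lemma Ffun_zero (x : ℕ ⊕ (ℕ ⊕ Unit) → ℝ) : Ffun x 0 = 1 := by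
  simp [Ffun, prodSnd]

lemma polymer_eq_Ffun (w : ℕ → ℕ → ℝ) (h11 : w 1 1 = 1) (h21 : w 2 1 = 1)
    (h22 : w 2 2 ≠ 0) (hrow2 : ∀ k, w (3+k) 2 ≠ 0) :
    ∀ k, polymerZ w (2+k) 2 / polymerZ w 2 2 =
      Ffun (Sum.elim (fun k => w (3+k) 1)
        (Sum.elim (fun k => w (3+k) 2) (fun _ : Unit => (w 2 2)⁻¹))) k := by
  set x : ℕ ⊕ (ℕ ⊕ Unit) → ℝ := Sum.elim (fun k => w (3+k) 1)
    (Sum.elim (fun k => w (3+k) 2) (fun _ : Unit => (w 2 2)⁻¹)) with hx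
  have hPSne : ∀ n, prodSnd x n ≠ 0 := by
    intro n
    refine Finset.prod_ne_zero_iff.mpr fun j _ => ?_
    exact hrow2 j
  have hPSsucc : ∀ n, prodSnd x (n+1) = prodSnd x n * w (3+n) 2 := by
    intro n
    exact Finset.prod_range_succ _ n
  have hF : ∀ k, Ffun x (k+1) = w (3+k) 2 * Ffun x k +
      (w 2 2)⁻¹ * (prodFst x (k+1) * w (3+k) 2) := by
    intro k
    simp only [Ffun]
    rw [Finset.sum_Icc_succ_top (by omega : 1 ≤ k+1), Nat.add_sub_cancel, hPSsucc k,
      mul_div_cancel_left₀ _ (hPSne k)]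
    have e2 : ∑ ℓ ∈ Finset.Icc 1 k, prodFst x ℓ * (prodSnd x k * w (3+k) 2 / prodSnd x (ℓ-1))
        = w (3+k) 2 * ∑ ℓ ∈ Finset.Icc 1 k, prodFst x ℓ * (prodSnd x k / prodSnd x (ℓ-1)) := by
      rw [Finset.mul_sum]
      refine Finset.sum_congr rfl fun ℓ _ => ?_
      rw [mul_div_right_comm]
      ring
    rw [e2]
    have hxw : x (Sum.inr (Sum.inr ())) = (w 2 2)⁻¹ := rfl
    rw [hxw]
    ring
  have key : ∀ k, polymerZ w (2+k) 2 = w 2 2 * Ffun x k := by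
    intro k
    induction k with
    | zero =>
      rw [Ffun_zero, mul_one]
      exact polymerZ_22 w h11 h21
    | succ k ih =>
      have hstep : polymerZ w (2+(k+1)) 2
          = w (3+k) 2 * (polymerZ w (2+k) 2 + prodFst x (k+1)) := by
        have hpf : prodFst x (k+1) = ∏ j ∈ Finset.range (k+1), w (3+j) 1 := rfl
        rw [show 2 + (k+1) = (2+k) + 1 from by omega, polymerZ_row2 w _ (by omega),
          Nat.add_sub_cancel, show (2+k)+1 = 2+(k+1) from by omega,
          polymerZ_row1_prod w h11 h21 (k+1), ← hpf, show 2+(k+1) = 3+k from by omega]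
      rw [hstep, ih, hF k]
      have hc : w 2 2 * (w 2 2)⁻¹ = 1 := mul_inv_cancel₀ h22
      calc w (3+k) 2 * (w 2 2 * Ffun x k + prodFst x (k+1))
          = w 2 2 * (w (3+k) 2 * Ffun x k) + 1 * (prodFst x (k+1) * w (3+k) 2) := by ring
        _ = w 2 2 * (w (3+k) 2 * Ffun x k) +
            (w 2 2 * (w 2 2)⁻¹) * (prodFst x (k+1) * w (3+k) 2) := by rw [hc]
        _ = w 2 2 * (w (3+k) 2 * Ffun x k + (w 2 2)⁻¹ * (prodFst x (k+1) * w (3+k) 2)) := by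
            ring
  intro k
  rw [key k, polymerZ_22 w h11 h21, mul_div_cancel_left₀ _ h22]

lemma zuv_eq_Ffun {Ω' : Type*} (r1 r2 : ℕ → Ω' → ℝ) (winv : Ω' → ℝ) (ω : Ω')
    (h10 : r1 0 ω = 1) (h20 : r2 0 ω = 1)
    (h1 : ∀ j, r1 (j+1) ω / r1 j ω ≠ 0) (h2 : ∀ j, r2 (j+1) ω / r2 j ω ≠ 0) :
    ∀ k, Ffun (fun i => Sum.elim (fun k ω => r1 (k+1) ω / r1 k ω)
        (Sum.elim (fun k ω => r2 (k+1) ω / r2 k ω) (fun _ : Unit => winv)) i ω) k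
      = zuvProc r1 r2 winv k ω := by
  intro k
  have hp1 : ∀ n, prodFst (fun i => Sum.elim (fun k ω => r1 (k+1) ω / r1 k ω)
      (Sum.elim (fun k ω => r2 (k+1) ω / r2 k ω) (fun _ : Unit => winv)) i ω) n = r1 n ω :=
    fun n => (walk_eq_prod (fun j => r1 j ω) h10 h1 n).1
  have hp2 : ∀ n, prodSnd (fun i => Sum.elim (fun k ω => r1 (k+1) ω / r1 k ω)
      (Sum.elim (fun k ω => r2 (k+1) ω / r2 k ω) (fun _ : Unit => winv)) i ω) n = r2 n ω :=
    fun n => (walk_eq_prod (fun j => r2 j ω) h20 h2 n).1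
  simp only [Ffun, zuvProc, hp1, hp2]
  rfl

/-- the index embedding into the octant -/
def octEmb : ℕ ⊕ (ℕ ⊕ Unit) → OctIdx :=
  Sum.elim (fun k => ⟨(3+k, 1), by omega⟩)
    (Sum.elim (fun k => ⟨(3+k, 2), by omega⟩) (fun _ => ⟨(2, 2), by omega⟩))

lemma octEmb_injective : Function.Injective octEmb := by
  rintro (a | a | a) (b | b | b) hab <;>
    simp only [octEmb, Sum.elim_inl, Sum.elim_inr, Subtype.mk.injEq, Prod.mk.injEq] at hab
  · exact congrArg Sum.inl (by omega)
  · exact (by omega : False).elim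
  · exact (by omega : False).elim
  · exact (by omega : False).elim
  · exact congrArg (Sum.inr ∘ Sum.inl) (by omega)
  · exact (by omega : False).elim
  · exact (by omega : False).elim
  · exact (by omega : False).elim
  · rcases a with ⟨⟩; rcases b with ⟨⟩; rfl

/-- **Identification of the two-row stationary ratios with `z_{u,v}`.**
The process `k ↦ z^stat_{u,v}(2+k,2)/z^stat_{u,v}(2,2)` has the same law as the process
`z_{u,v}`. Here `W` denotes the two-row stationary weights (parameters `α∘ = u, α₁ = v,
α₂ = -v, αᵢ = α` for `i ≥ 3`, with the weights at `(1,1)` and `(2,1)` set to `1`). -/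
theorem tworow_ratio_is_zuv
    (α u v : ℝ) (hα : 0 < α) (hu : -α < u) (hv : -α < v) (hv' : v < α) (hvu : v < u)
    {Ω : Type*} [MeasurableSpace Ω] (P : Measure Ω) [IsProbabilityMeasure P]
    (W : ℕ → ℕ → Ω → ℝ) (hWmeas : ∀ n m, Measurable (W n m))
    (hW11 : W 1 1 = fun _ => 1) (hW21 : W 2 1 = fun _ => 1)
    (hWindep : iIndepFun (fun p : OctIdx => W p.1.1 p.1.2) P)
    (hW22 : Measure.map (W 2 2) P = invGammaMeasure (u - v))
    (hWrow1 : ∀ i, 3 ≤ i → Measure.map (W i 1) P = invGammaMeasure (α + v))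
    (hWrow2 : ∀ i, 3 ≤ i → Measure.map (W i 2) P = invGammaMeasure (α - v))
    (hWdiag : ∀ i, 3 ≤ i → Measure.map (W i i) P = invGammaMeasure (u + α))
    (hWbulk : ∀ i j, 3 ≤ j → j < i → Measure.map (W i j) P = invGammaMeasure (2 * α))
    {Ω' : Type*} [MeasurableSpace Ω'] (P' : Measure Ω') [IsProbabilityMeasure P']
    (r1 r2 : ℕ → Ω' → ℝ) (winv : Ω' → ℝ)
    (henv : IsZuvEnv P' α u v r1 r2 winv) :
    Measure.map (fun ω (k : ℕ) =>
        polymerZ (fun a b => W a b ω) (2 + k) 2 / polymerZ (fun a b => W a b ω) 2 2) P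
      = Measure.map (fun ω (k : ℕ) => zuvProc r1 r2 winv k ω) P' := by
  classical
  -- the two increment families
  set X : ℕ ⊕ (ℕ ⊕ Unit) → Ω → ℝ := Sum.elim (fun k => W (3+k) 1)
    (Sum.elim (fun k => W (3+k) 2) (fun _ : Unit => fun ω => (W 2 2 ω)⁻¹)) with hX
  set Y : ℕ ⊕ (ℕ ⊕ Unit) → Ω' → ℝ := Sum.elim (fun k ω => r1 (k + 1) ω / r1 k ω)
    (Sum.elim (fun k ω => r2 (k + 1) ω / r2 k ω) (fun _ : Unit => winv)) with hY
  have hXmeas : ∀ i, Measurable (X i) := by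
    rintro (k | k | k)
    · exact hWmeas _ _
    · exact hWmeas _ _
    · exact (hWmeas 2 2).inv
  have hYmeas : ∀ i, Measurable (Y i) := by
    rintro (k | k | k)
    · exact (henv.meas_r1 _).div (henv.meas_r1 _)
    · exact (henv.meas_r2 _).div (henv.meas_r2 _)
    · exact henv.meas_winv
  -- independence of X
  have hXindep : iIndepFun X P := by
    have h0 := my_iIndepFun_reindex octEmb octEmb_injective hWindep
    have h1 := h0.comp (Sum.elim (fun _ : ℕ => (id : ℝ → ℝ))
      (Sum.elim (fun _ : ℕ => (id : ℝ → ℝ)) (fun _ : Unit => (Inv.inv : ℝ → ℝ))))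
      (by rintro (k | k | k)
          · exact measurable_id
          · exact measurable_id
          · exact measurable_inv)
    have heq : (fun i => Sum.elim (fun _ : ℕ => (id : ℝ → ℝ))
        (Sum.elim (fun _ : ℕ => (id : ℝ → ℝ)) (fun _ : Unit => (Inv.inv : ℝ → ℝ))) i ∘
        (fun p : OctIdx => W p.1.1 p.1.2) (octEmb i)) = X := by
      funext i
      rcases i with k | k | k <;> rfl
    rwa [heq] at h1
  have hYindep : iIndepFun Y P' := henv.indep
  -- marginal laws agree
  have hlaw : ∀ i, Measure.map (X i) P = Measure.map (Y i) P' := by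
    rintro (k | k | k)
    · rw [show X (Sum.inl k) = W (3+k) 1 from rfl,
        show Y (Sum.inl k) = fun ω => r1 (k + 1) ω / r1 k ω from rfl,
        hWrow1 (3+k) (by omega), henv.law_r1 k]
    · rw [show X (Sum.inr (Sum.inl k)) = W (3+k) 2 from rfl,
        show Y (Sum.inr (Sum.inl k)) = fun ω => r2 (k + 1) ω / r2 k ω from rfl,
        hWrow2 (3+k) (by omega), henv.law_r2 k]
    · rw [show X (Sum.inr (Sum.inr k)) = (fun x : ℝ => x⁻¹) ∘ W 2 2 from rfl,
        show Y (Sum.inr (Sum.inr k)) = winv from rfl,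
        ← Measure.map_map measurable_inv (hWmeas 2 2), hW22, henv.law_winv hvu.ne']
  -- joint laws agree
  have hjoint : Measure.map (fun ω i => X i ω) P = Measure.map (fun ω i => Y i ω) P' :=
    my_map_pi_eq_of_iIndep hXmeas hYmeas hXindep hYindep hlaw
  -- a.e. identification on the polymer side
  have haeW : (fun ω (k : ℕ) =>
      polymerZ (fun a b => W a b ω) (2 + k) 2 / polymerZ (fun a b => W a b ω) 2 2)
      =ᵐ[P] fun ω => Ffun (fun i => X i ω) := by
    have hpos1 : ∀ᵐ ω ∂P, ∀ k : ℕ, 0 < W (3+k) 2 ω :=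
      ae_all_iff.mpr fun k => ae_pos_of_law (hWmeas _ _) (hWrow2 (3+k) (by omega))
    have hpos2 : ∀ᵐ ω ∂P, 0 < W 2 2 ω := ae_pos_of_law (hWmeas 2 2) hW22
    filter_upwards [hpos1, hpos2] with ω hω1 hω2
    funext k
    have := polymer_eq_Ffun (fun a b => W a b ω)
      (by show W 1 1 ω = 1; rw [hW11]) (by show W 2 1 ω = 1; rw [hW21])
      (ne_of_gt hω2) (fun j => ne_of_gt (hω1 j)) k
    rw [this]
    rfl
  -- a.e. identification on the z_{u,v} side
  have haeY : (fun ω (k : ℕ) => zuvProc r1 r2 winv k ω)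
      =ᵐ[P'] fun ω => Ffun (fun i => Y i ω) := by
    have hpos1 : ∀ᵐ ω ∂P', ∀ k : ℕ, 0 < r1 (k+1) ω / r1 k ω :=
      ae_all_iff.mpr fun k =>
        ae_pos_of_law ((henv.meas_r1 _).div (henv.meas_r1 _)) (henv.law_r1 k)
    have hpos2 : ∀ᵐ ω ∂P', ∀ k : ℕ, 0 < r2 (k+1) ω / r2 k ω :=
      ae_all_iff.mpr fun k =>
        ae_pos_of_law ((henv.meas_r2 _).div (henv.meas_r2 _)) (henv.law_r2 k)
    filter_upwards [hpos1, hpos2, henv.r1_zero, henv.r2_zero] with ω hω1 hω2 hz1 hz2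
    funext k
    exact (zuv_eq_Ffun r1 r2 winv ω hz1 hz2
      (fun j => ne_of_gt (hω1 j)) (fun j => ne_of_gt (hω2 j)) k).symm
  -- assemble
  have hXm : Measurable (fun ω i => X i ω) := measurable_pi_lambda _ hXmeas
  have hYm : Measurable (fun ω i => Y i ω) := measurable_pi_lambda _ hYmeas
  calc Measure.map (fun ω (k : ℕ) =>
        polymerZ (fun a b => W a b ω) (2 + k) 2 / polymerZ (fun a b => W a b ω) 2 2) P
      = Measure.map (fun ω => Ffun (fun i => X i ω)) P := Measure.map_congr haeW
    _ = Measure.map (Ffun ∘ fun ω i => X i ω) P := by rw [Function.comp_def]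
    _ = Measure.map Ffun (Measure.map (fun ω i => X i ω) P) :=
        (Measure.map_map measurable_Ffun hXm).symm
    _ = Measure.map Ffun (Measure.map (fun ω i => Y i ω) P') := by rw [hjoint]
    _ = Measure.map (Ffun ∘ fun ω i => Y i ω) P' := Measure.map_map measurable_Ffun hYm
    _ = Measure.map (fun ω => Ffun (fun i => Y i ω)) P' := by rw [Function.comp_def]
    _ = Measure.map (fun ω (k : ℕ) => zuvProc r1 r2 winv k ω) P' :=
        (Measure.map_congr haeY).symm

end
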